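/- Let m, n be positive integers and A ∈ Matrix (Fin m) (Fin n) ℂ. For λ > 0 the matrix AᴴA + λI is invertible. Then for every e ∈ ℂ^n, as λ → 0⁺ the vector (AᴴA + λ I)⁻¹ (AᴴA) e converges to the orthogonal projection of e onto the range of Aᴴ (equivalently, the range of AᴴA), the orthogonal projection being taken in the Euclidean inner-product space ℂ^n. -/

import Mathlib

open MeasureTheory Matrix Filter

set_option maxHeartbeats 1000000

/-- **Tikhonov regularization converges to the orthogonal projection (ENSURE data term).**
Let `A` be an `m × n` complex matrix.  For every `λ > 0` the matrix `AᴴA + λI` is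
invertible, and for every `e ∈ ℂ^n`, as `λ → 0⁺` the vector `(AᴴA + λI)⁻¹ (AᴴA) e`
converges to the orthogonal projection of `e` onto the range of `Aᴴ` in the Euclidean
inner-product space `ℂ^n`. -/
theorem tikhonov_tendsto_orthogonalProjection
    {m n : ℕ} (hm : 0 < m) (hn : 0 < n)
    (A : Matrix (Fin m) (Fin n) ℂ) :
    (∀ l : ℝ, 0 < l →
        IsUnit (Aᴴ * A + (l : ℂ) • (1 : Matrix (Fin n) (Fin n) ℂ))) ∧
    ∀ e : EuclideanSpace ℂ (Fin n),
      Tendsto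
        (fun l : ℝ =>
          Matrix.toEuclideanLin
            ((Aᴴ * A + (l : ℂ) • (1 : Matrix (Fin n) (Fin n) ℂ))⁻¹ * (Aᴴ * A)) e)
        (nhdsWithin 0 (Set.Ioi 0))
        (nhds
          ((Submodule.orthogonalProjectionOnto (LinearMap.range (Matrix.toEuclideanLin Aᴴ)) e :
              EuclideanSpace ℂ (Fin n)))) := by
  classical
  set S : EuclideanSpace ℂ (Fin n) →ₗ[ℂ] EuclideanSpace ℂ (Fin m) :=
    Matrix.toEuclideanLin A with hSdef
  set B : EuclideanSpace ℂ (Fin n) →ₗ[ℂ] EuclideanSpace ℂ (Fin n) :=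
    Matrix.toEuclideanLin (Aᴴ * A) with hBdef
  -- multiplicativity of toEuclideanLin
  have hmul : ∀ {k p q : ℕ} (M : Matrix (Fin k) (Fin p) ℂ) (N : Matrix (Fin p) (Fin q) ℂ)
      (v : EuclideanSpace ℂ (Fin q)),
      Matrix.toEuclideanLin (M * N) v = Matrix.toEuclideanLin M (Matrix.toEuclideanLin N v) := by
    intro k p q M N v
    simp [Matrix.toEuclideanLin_apply, Matrix.mulVec_mulVec]
  have hBv : ∀ v, B v = LinearMap.adjoint S (S v) := by
    intro v
    rw [hBdef, hmul, Matrix.toEuclideanLin_conjTranspose_eq_adjoint, hSdef]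
  have hinner : ∀ v : EuclideanSpace ℂ (Fin n),
      (inner ℂ (B v) v : ℂ) = ((‖S v‖ : ℂ)) ^ 2 := by
    intro v
    rw [hBv, LinearMap.adjoint_inner_left, inner_self_eq_norm_sq_to_K]
    norm_num
  -- the matrix (AᴴA + l•1) acts as B + l•id
  have hMl : ∀ (l : ℝ) (v : EuclideanSpace ℂ (Fin n)),
      Matrix.toEuclideanLin (Aᴴ * A + (l : ℂ) • (1 : Matrix (Fin n) (Fin n) ℂ)) v
        = B v + (l : ℂ) • v := by
    intro l v
    have h1 : Matrix.toEuclideanLin (1 : Matrix (Fin n) (Fin n) ℂ) v = v := by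
      simp [Matrix.toEuclideanLin_apply, Matrix.one_mulVec]
    rw [map_add, _root_.map_smul]
    simp only [LinearMap.add_apply, LinearMap.smul_apply, h1, hBdef]
  -- key norm inequalities
  have hle : ∀ (l : ℝ), 0 < l → ∀ v : EuclideanSpace ℂ (Fin n),
      ‖B v‖ ≤ ‖B v + (l : ℂ) • v‖ ∧ l * ‖v‖ ≤ ‖B v + (l : ℂ) • v‖ := by
    intro l hl v
    have hsq : ‖B v + (l : ℂ) • v‖ ^ 2
        = ‖B v‖ ^ 2 + 2 * (l * ‖S v‖ ^ 2) + (l * ‖v‖) ^ 2 := by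
      rw [@norm_add_sq ℂ]
      have h1 : (inner ℂ (B v) ((l : ℂ) • v) : ℂ) = ((l * ‖S v‖ ^ 2 : ℝ) : ℂ) := by
        rw [inner_smul_right, hinner]
        push_cast
        ring
      rw [h1]
      have h2 : ‖(l : ℂ) • v‖ = l * ‖v‖ := by
        rw [norm_smul, Complex.norm_real, Real.norm_eq_abs, abs_of_pos hl]
      rw [h2]
      norm_num
      left
      rw [← Complex.ofReal_pow, Complex.ofReal_re]
    have hx1 : 0 ≤ l * ‖S v‖ ^ 2 := mul_nonneg hl.le (sq_nonneg _)
    constructor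
    · nlinarith [norm_nonneg (B v), norm_nonneg (B v + (l : ℂ) • v),
        mul_nonneg hl.le (norm_nonneg v)]
    · nlinarith [norm_nonneg (B v), norm_nonneg (B v + (l : ℂ) • v),
        mul_nonneg hl.le (norm_nonneg v)]
  -- injectivity of B + l • id
  have hinj : ∀ (l : ℝ), 0 < l → ∀ u : EuclideanSpace ℂ (Fin n),
      Matrix.toEuclideanLin (Aᴴ * A + (l : ℂ) • (1 : Matrix (Fin n) (Fin n) ℂ)) u = 0 →
      u = 0 := by
    intro l hl u hu
    rw [hMl] at hu
    have h2 := (hle l hl u).2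
    rw [hu, norm_zero] at h2
    have : ‖u‖ = 0 := le_antisymm (by nlinarith) (norm_nonneg u)
    exact norm_eq_zero.mp this
  have hunit : ∀ l : ℝ, 0 < l →
      IsUnit (Aᴴ * A + (l : ℂ) • (1 : Matrix (Fin n) (Fin n) ℂ)) := by
    intro l hl
    rw [← Matrix.mulVec_injective_iff_isUnit]
    intro v w hvw
    set M := Aᴴ * A + (l : ℂ) • (1 : Matrix (Fin n) (Fin n) ℂ) with hM
    have h1 : Matrix.toEuclideanLin M ((WithLp.equiv 2 (Fin n → ℂ)).symm v)
        = Matrix.toEuclideanLin M ((WithLp.equiv 2 (Fin n → ℂ)).symm w) := by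
      rw [WithLp.equiv_symm_apply, Matrix.toEuclideanLin_apply_piLp_toLp,
        Matrix.toEuclideanLin_apply_piLp_toLp, hvw]
    have h2 : (WithLp.equiv 2 (Fin n → ℂ)).symm v - (WithLp.equiv 2 (Fin n → ℂ)).symm w = 0 := by
      apply hinj l hl
      rw [map_sub, h1, sub_self]
    have h3 : (WithLp.equiv 2 (Fin n → ℂ)).symm v = (WithLp.equiv 2 (Fin n → ℂ)).symm w :=
      sub_eq_zero.mp h2
    exact (WithLp.equiv 2 (Fin n → ℂ)).symm.injective h3
  -- the range of Aᴴ equals the range of AᴴA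
  have hrange : LinearMap.range (Matrix.toEuclideanLin Aᴴ) = LinearMap.range B := by
    apply le_antisymm
    · rintro _ ⟨y, rfl⟩
      set R := LinearMap.range S
      obtain ⟨x, hx⟩ : ∃ x, S x = (Submodule.orthogonalProjectionOnto R y : EuclideanSpace ℂ (Fin m)) :=
        (Submodule.orthogonalProjectionOnto R y).2
      refine ⟨x, ?_⟩
      have hperp : y - (Submodule.orthogonalProjectionOnto R y : EuclideanSpace ℂ (Fin m)) ∈ Rᗮ :=
        by exact R.sub_starProjection_mem_orthogonal y
      have hker : LinearMap.adjoint S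
          (y - (Submodule.orthogonalProjectionOnto R y : EuclideanSpace ℂ (Fin m))) = 0 := by
        set w := y - (Submodule.orthogonalProjectionOnto R y : EuclideanSpace ℂ (Fin m)) with hw
        have : (inner ℂ (LinearMap.adjoint S w) (LinearMap.adjoint S w) : ℂ) = 0 := by
          rw [LinearMap.adjoint_inner_left]
          exact (Submodule.mem_orthogonal' R w).mp hperp _ ⟨_, rfl⟩
        exact inner_self_eq_zero.mp this
      rw [hBv, hx, Matrix.toEuclideanLin_conjTranspose_eq_adjoint]
      have h5 : LinearMap.adjoint S y
          = LinearMap.adjoint S ((Submodule.orthogonalProjectionOnto R y : EuclideanSpace ℂ (Fin m))) := by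
        have h6 := hker
        rw [map_sub] at h6
        exact sub_eq_zero.mp h6
      exact h5.symm
    · rintro _ ⟨x, rfl⟩
      refine ⟨S x, ?_⟩
      rw [Matrix.toEuclideanLin_conjTranspose_eq_adjoint, ← hBv]
  refine ⟨hunit, fun e => ?_⟩
  set K := LinearMap.range (Matrix.toEuclideanLin Aᴴ) with hK
  set p : EuclideanSpace ℂ (Fin n) := (Submodule.orthogonalProjectionOnto K e : EuclideanSpace ℂ (Fin n))
    with hp
  have hpK : p ∈ K := (Submodule.orthogonalProjectionOnto K e).2
  obtain ⟨x, hx⟩ : ∃ x, B x = p := by rw [hrange] at hpK; exact hpK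
  -- B e = B p
  have heBp : B e = B p := by
    have hperp : e - p ∈ Kᗮ := by exact K.sub_starProjection_mem_orthogonal e
    have hS0 : S (e - p) = 0 := by
      have h1 : (inner ℂ (S (e - p)) (S (e - p)) : ℂ) = 0 := by
        rw [← LinearMap.adjoint_inner_left, ← hBv]
        have hBmem : B (e - p) ∈ K := by rw [hrange]; exact ⟨_, rfl⟩
        exact (Submodule.mem_orthogonal K (e - p)).mp hperp _ hBmem
      exact inner_self_eq_zero.mp h1
    have : B (e - p) = 0 := by rw [hBv, hS0, map_zero]
    rw [map_sub] at this
    exact sub_eq_zero.mp this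
  -- main estimate: for l > 0, ‖g l - p‖ ≤ l * ‖x‖
  have hbound : ∀ l : ℝ, 0 < l →
      ‖Matrix.toEuclideanLin
          ((Aᴴ * A + (l : ℂ) • (1 : Matrix (Fin n) (Fin n) ℂ))⁻¹ * (Aᴴ * A)) e - p‖
        ≤ l * ‖x‖ := by
    intro l hl
    set Ml := Aᴴ * A + (l : ℂ) • (1 : Matrix (Fin n) (Fin n) ℂ) with hMldef
    have hdet : IsUnit Ml.det := (Matrix.isUnit_iff_isUnit_det _).mp (hunit l hl)
    have hinv1 : Ml⁻¹ * Ml = 1 := Matrix.nonsing_inv_mul _ hdet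
    have hinv2 : Ml * Ml⁻¹ = 1 := Matrix.mul_nonsing_inv _ hdet
    have hcomm : Ml * (Aᴴ * A) = (Aᴴ * A) * Ml := by
      rw [hMldef]
      simp only [Matrix.add_mul, Matrix.mul_add, Matrix.smul_mul, Matrix.mul_smul,
        Matrix.one_mul, Matrix.mul_one]
    have hcomm' : Ml⁻¹ * (Aᴴ * A) = (Aᴴ * A) * Ml⁻¹ := by
      calc Ml⁻¹ * (Aᴴ * A) = Ml⁻¹ * (Aᴴ * A) * (Ml * Ml⁻¹) := by
            rw [hinv2, Matrix.mul_one]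
        _ = Ml⁻¹ * ((Aᴴ * A) * Ml) * Ml⁻¹ := by
            simp only [Matrix.mul_assoc]
        _ = Ml⁻¹ * (Ml * (Aᴴ * A)) * Ml⁻¹ := by rw [hcomm]
        _ = (Ml⁻¹ * Ml) * ((Aᴴ * A) * Ml⁻¹) := by simp only [Matrix.mul_assoc]
        _ = (Aᴴ * A) * Ml⁻¹ := by rw [hinv1, Matrix.one_mul]
    have hMlmul : Ml * (Ml⁻¹ * (Aᴴ * A)) = Aᴴ * A := by
      rw [← Matrix.mul_assoc, hinv2, Matrix.one_mul]
    set u : EuclideanSpace ℂ (Fin n) := Matrix.toEuclideanLin Ml⁻¹ x with hu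
    -- key identity
    have key : Matrix.toEuclideanLin (Ml⁻¹ * (Aᴴ * A)) e - p = -((l : ℂ) • B u) := by
      have hz : Matrix.toEuclideanLin Ml
          ((Matrix.toEuclideanLin (Ml⁻¹ * (Aᴴ * A)) e - p) - (-((l : ℂ) • B u))) = 0 := by
        have e1 : Matrix.toEuclideanLin Ml (Matrix.toEuclideanLin (Ml⁻¹ * (Aᴴ * A)) e)
            = B e := by
          rw [← hmul, hMlmul]
        have e2 : B u = Matrix.toEuclideanLin (Ml⁻¹ * (Aᴴ * A)) x := by
          rw [hBdef, hu, ← hmul (Aᴴ * A) Ml⁻¹ x, ← hcomm']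
        have e3 : Matrix.toEuclideanLin Ml (B u) = B x := by
          rw [e2, ← hmul, hMlmul]
        rw [map_sub, map_sub, map_neg, _root_.map_smul, e1, e3, hMl l p, heBp, hx]
        abel
      have := hinj l hl _ hz
      exact sub_eq_zero.mp this
    have hnorm1 : ‖Matrix.toEuclideanLin (Ml⁻¹ * (Aᴴ * A)) e - p‖ = l * ‖B u‖ := by
      rw [key, norm_neg, norm_smul, Complex.norm_real, Real.norm_eq_abs, abs_of_pos hl]
    have hnorm2 : ‖B u‖ ≤ ‖x‖ := by
      have h1 := (hle l hl u).1
      have h2 : B u + (l : ℂ) • u = x := by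
        rw [← hMl l u, hu, ← hmul, hinv2]
        simp [Matrix.toEuclideanLin_apply, Matrix.one_mulVec]
      rwa [h2] at h1
    rw [hnorm1]
    exact mul_le_mul_of_nonneg_left hnorm2 hl.le
  -- conclude by squeezing
  rw [tendsto_iff_norm_sub_tendsto_zero]
  apply squeeze_zero' (g := fun l : ℝ => l * ‖x‖)
  · exact Eventually.of_forall fun l => norm_nonneg _
  · filter_upwards [self_mem_nhdsWithin] with l hl
    exact hbound l hl
  · have : Tendsto (fun l : ℝ => l * ‖x‖) (nhdsWithin 0 (Set.Ioi 0)) (nhds (0 * ‖x‖)) :=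
      (tendsto_id.mono_left nhdsWithin_le_nhds).mul_const _
    simpa using this
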